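/- Let S : Ω → Δ(𝒴) be a measurable random variable, let C := Q_{σ(S)}, and let Q̄ ∈ Δ(𝒴) be the marginal law of Y, i.e. Q̄(y) = P(Y = y). Then E[ℓ(S,Y)] = E_ℓ(Q̄) − E[d_ℓ(Q̄, C)] + E[d_ℓ(S, C)]. -/

import Mathlib

open MeasureTheory Finset

noncomputable section

/-- The probability simplex on a finite label set `𝒴`, identified with the set of
functions `p : 𝒴 → ℝ` with nonnegative coordinates summing to one. -/
def simplex (𝒴 : Type*) [Fintype 𝒴] : Set (𝒴 → ℝ) :=
  {p | (∀ y, 0 ≤ p y) ∧ ∑ y, p y = 1}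

/-- Conditional risk `L(p,q) := ∑_y q(y) ℓ(p,y)`. -/
def condRisk {𝒴 : Type*} [Fintype 𝒴] (ℓ : (𝒴 → ℝ) → 𝒴 → ℝ) (p q : 𝒴 → ℝ) : ℝ :=
  ∑ y, q y * ℓ p y

/-- Generalized entropy `E_ℓ(q) := L(q,q)`. -/
def gEntropy {𝒴 : Type*} [Fintype 𝒴] (ℓ : (𝒴 → ℝ) → 𝒴 → ℝ) (q : 𝒴 → ℝ) : ℝ :=
  condRisk ℓ q q

/-- Divergence (regret) `d_ℓ(p,q) := L(p,q) - E_ℓ(q)`. -/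
def divg {𝒴 : Type*} [Fintype 𝒴] (ℓ : (𝒴 → ℝ) → 𝒴 → ℝ) (p q : 𝒴 → ℝ) : ℝ :=
  condRisk ℓ p q - gEntropy ℓ q

lemma simplex_abs_le_one {𝒴 : Type*} [Fintype 𝒴] {p : 𝒴 → ℝ} (hp : p ∈ simplex 𝒴)
    (y : 𝒴) : |p y| ≤ 1 := by
  rw [abs_of_nonneg (hp.1 y)]
  calc p y ≤ ∑ z, p z := Finset.single_le_sum (fun z _ => hp.1 z) (mem_univ y)
  _ = 1 := hp.2

/-- uncertainty–resolution–reliability form. For a measurable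
`Δ(𝒴)`-valued score `S`, with `C := Q_{σ(S)}` and `Q̄` the marginal law of `Y`,
`E[ℓ(S,Y)] = E_ℓ(Q̄) − E[d_ℓ(Q̄,C)] + E[d_ℓ(S,C)]`. -/
theorem uncertainty_resolution_reliability
    {Ω 𝒴 : Type*} [Fintype 𝒴] [Nonempty 𝒴]
    [MeasurableSpace 𝒴] [MeasurableSingletonClass 𝒴]
    {mΩ : MeasurableSpace Ω} {P : Measure Ω} [IsProbabilityMeasure P]
    (Y : Ω → 𝒴) (hY : Measurable Y)
    (ℓ : (𝒴 → ℝ) → 𝒴 → ℝ)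
    (hℓmeas : ∀ y, Measurable fun p : 𝒴 → ℝ => ℓ p y)
    (hℓbdd : ∃ M : ℝ, ∀ p ∈ simplex 𝒴, ∀ y, |ℓ p y| ≤ M)
    (S : Ω → 𝒴 → ℝ) (hSΔ : ∀ ω, S ω ∈ simplex 𝒴) (hSmeas : Measurable S)
    (C : Ω → 𝒴 → ℝ) (hCΔ : ∀ ω, C ω ∈ simplex 𝒴)
    (hCmeas : ∀ y, Measurable[MeasurableSpace.comap S inferInstance] fun ω => C ω y)
    (hCver : ∀ y, (fun ω => C ω y)
      =ᵐ[P] P[Set.indicator {ω | Y ω = y} (fun _ => (1 : ℝ))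
              | MeasurableSpace.comap S inferInstance])
    (Qbar : 𝒴 → ℝ) (hQbar : ∀ y, Qbar y = (P {ω | Y ω = y}).toReal) :
    ∫ ω, ℓ (S ω) (Y ω) ∂P
      = gEntropy ℓ Qbar - ∫ ω, divg ℓ Qbar (C ω) ∂P + ∫ ω, divg ℓ (S ω) (C ω) ∂P := by
  classical
  obtain ⟨M₀, hM₀⟩ := hℓbdd
  have hm : MeasurableSpace.comap S inferInstance ≤ mΩ := hSmeas.comap_le
  set M : ℝ := max M₀ 0 with hMdef
  have hM : ∀ p ∈ simplex 𝒴, ∀ y, |ℓ p y| ≤ M :=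
    fun p hp y => (hM₀ p hp y).trans (le_max_left _ _)
  -- measurability
  have hCymeas : ∀ y, Measurable[mΩ] fun ω => C ω y := fun y => (hCmeas y).mono hm le_rfl
  have hCmeas' : Measurable[mΩ] C := measurable_pi_lambda _ hCymeas
  have hlS : ∀ y, Measurable[mΩ] fun ω => ℓ (S ω) y := fun y => (hℓmeas y).comp hSmeas
  have hlC : ∀ y, Measurable[mΩ] fun ω => ℓ (C ω) y := fun y => (hℓmeas y).comp hCmeas'
  -- integrability helper
  have hint : ∀ (f : Ω → ℝ), Measurable[mΩ] f → ∀ (B : ℝ), (∀ ω, |f ω| ≤ B) → Integrable f P :=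
    fun f hf B hB => (integrable_const B).mono' hf.aestronglyMeasurable (ae_of_all _ hB)
  -- per-coordinate integrable pieces
  have hf1 : ∀ y, Integrable (fun ω => C ω y * ℓ (S ω) y) P := by
    intro y
    refine hint _ ((hCymeas y).mul (hlS y)) M fun ω => ?_
    rw [abs_mul]
    calc |C ω y| * |ℓ (S ω) y| ≤ 1 * M :=
          mul_le_mul (simplex_abs_le_one (hCΔ ω) y) (hM _ (hSΔ ω) y) (abs_nonneg _) zero_le_one
    _ = M := one_mul M
  have hf2 : ∀ y, Integrable (fun ω => C ω y * ℓ (C ω) y) P := by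
    intro y
    refine hint _ ((hCymeas y).mul (hlC y)) M fun ω => ?_
    rw [abs_mul]
    calc |C ω y| * |ℓ (C ω) y| ≤ 1 * M :=
          mul_le_mul (simplex_abs_le_one (hCΔ ω) y) (hM _ (hCΔ ω) y) (abs_nonneg _) zero_le_one
    _ = M := one_mul M
  have hf3 : ∀ y, Integrable (fun ω => C ω y * ℓ Qbar y) P := by
    intro y
    refine hint _ ((hCymeas y).mul measurable_const) (|ℓ Qbar y|) fun ω => ?_
    rw [abs_mul]
    calc |C ω y| * |ℓ Qbar y| ≤ 1 * |ℓ Qbar y| :=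
          mul_le_mul_of_nonneg_right (simplex_abs_le_one (hCΔ ω) y) (abs_nonneg _)
    _ = |ℓ Qbar y| := one_mul _
  have hindmeas : ∀ y : 𝒴, MeasurableSet[mΩ] {ω | Y ω = y} := fun y =>
    hY (measurableSet_singleton y)
  have hindbd : ∀ (y : 𝒴) (ω : Ω),
      |Set.indicator {ω' | Y ω' = y} (fun _ => (1 : ℝ)) ω| ≤ 1 := by
    intro y ω
    rw [Set.indicator_apply]
    split_ifs <;> simp
  have hindint : ∀ y : 𝒴, Integrable (Set.indicator {ω | Y ω = y} (fun _ => (1 : ℝ))) P :=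
    fun y => hint _ (measurable_const.indicator (hindmeas y)) 1 (hindbd y)
  have hfind : ∀ y : 𝒴, Integrable
      (fun ω => Set.indicator {ω' | Y ω' = y} (fun _ => (1 : ℝ)) ω * ℓ (S ω) y) P := by
    intro y
    refine hint _ ((measurable_const.indicator (hindmeas y)).mul (hlS y)) M fun ω => ?_
    rw [abs_mul]
    calc _ ≤ 1 * M :=
          mul_le_mul (hindbd y ω) (hM _ (hSΔ ω) y) (abs_nonneg _) zero_le_one
    _ = M := one_mul M
  have hIndInt : ∀ y : 𝒴, ∫ ω, Set.indicator {ω' | Y ω' = y} (fun _ => (1 : ℝ)) ω ∂P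
      = (P {ω | Y ω = y}).toReal := by
    intro y
    rw [integral_indicator_const (1 : ℝ) (hindmeas y), smul_eq_mul, mul_one]
    rfl
  set m : MeasurableSpace Ω := MeasurableSpace.comap S inferInstance with hm_def
  haveI : SigmaFinite (P.trim hm) := by
    have : IsFiniteMeasure (P.trim hm) := isFiniteMeasure_trim hm
    infer_instance
  have hSm : Measurable[m] S := Measurable.of_comap_le le_rfl
  -- key conditioning step
  have hB : ∀ y : 𝒴,
      ∫ ω, Set.indicator {ω' | Y ω' = y} (fun _ => (1 : ℝ)) ω * ℓ (S ω) y ∂P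
        = ∫ ω, C ω y * ℓ (S ω) y ∂P := by
    intro y
    have hg : StronglyMeasurable[m] fun ω => ℓ (S ω) y :=
      ((hℓmeas y).comp hSm).stronglyMeasurable
    have hmul_int : Integrable
        ((fun ω => ℓ (S ω) y) * Set.indicator {ω' | Y ω' = y} (fun _ => (1 : ℝ))) P := by
      have := hfind y
      simpa [mul_comm, Pi.mul_def] using this
    have hpull := condExp_mul_of_stronglyMeasurable_left (μ := P) (m := m) hg hmul_int (hindint y)
    calc ∫ ω, Set.indicator {ω' | Y ω' = y} (fun _ => (1 : ℝ)) ω * ℓ (S ω) y ∂P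
        = ∫ ω, ((fun ω => ℓ (S ω) y) * Set.indicator {ω' | Y ω' = y} (fun _ => (1 : ℝ))) ω ∂P := by
          simp [mul_comm]
    _ = ∫ ω, (P[(fun ω => ℓ (S ω) y) * Set.indicator {ω' | Y ω' = y} (fun _ => (1 : ℝ))|m]) ω ∂P :=
          (integral_condExp hm).symm
    _ = ∫ ω, ((fun ω => ℓ (S ω) y)
          * P[Set.indicator {ω' | Y ω' = y} (fun _ => (1 : ℝ))|m]) ω ∂P :=
          integral_congr_ae hpull
    _ = ∫ ω, C ω y * ℓ (S ω) y ∂P := by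
          refine integral_congr_ae ?_
          filter_upwards [hCver y] with ω hω
          simp only [Pi.mul_apply]
          rw [hω, mul_comm]
  -- the marginal of C is Qbar
  have hCint : ∀ y : 𝒴, ∫ ω, C ω y ∂P = Qbar y := by
    intro y
    rw [integral_congr_ae (hCver y), integral_condExp hm, hIndInt y, hQbar]
  -- decompose the left-hand side
  have hpt : ∀ ω, ℓ (S ω) (Y ω)
      = ∑ y, Set.indicator {ω' | Y ω' = y} (fun _ => (1 : ℝ)) ω * ℓ (S ω) y := by
    intro ω
    rw [Finset.sum_eq_single (Y ω)]
    · simp [Set.indicator_apply]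
    · intro b _ hb
      rw [Set.indicator_apply, if_neg (by simpa using fun h => hb h.symm), zero_mul]
    · intro h; exact absurd (mem_univ _) h
  have hLHS : ∫ ω, ℓ (S ω) (Y ω) ∂P = ∑ y, ∫ ω, C ω y * ℓ (S ω) y ∂P := by
    rw [integral_congr_ae (Filter.Eventually.of_forall hpt),
      integral_finset_sum _ (fun y _ => hfind y)]
    exact Finset.sum_congr rfl fun y _ => hB y
  -- the two divergence integrals
  have hdiv1 : ∫ ω, divg ℓ Qbar (C ω) ∂P
      = (∑ y, Qbar y * ℓ Qbar y) - ∑ y, ∫ ω, C ω y * ℓ (C ω) y ∂P := by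
    have hptd : ∀ ω, divg ℓ Qbar (C ω)
        = (∑ y, C ω y * ℓ Qbar y) - ∑ y, C ω y * ℓ (C ω) y := fun ω => rfl
    rw [integral_congr_ae (Filter.Eventually.of_forall hptd),
      integral_sub (integrable_finset_sum _ fun y _ => hf3 y)
        (integrable_finset_sum _ fun y _ => hf2 y),
      integral_finset_sum _ (fun y _ => hf3 y),
      integral_finset_sum _ (fun y _ => hf2 y)]
    congr 1
    refine Finset.sum_congr rfl fun y _ => ?_
    rw [integral_mul_const, hCint y]
  have hdiv2 : ∫ ω, divg ℓ (S ω) (C ω) ∂P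
      = (∑ y, ∫ ω, C ω y * ℓ (S ω) y ∂P) - ∑ y, ∫ ω, C ω y * ℓ (C ω) y ∂P := by
    have hptd : ∀ ω, divg ℓ (S ω) (C ω)
        = (∑ y, C ω y * ℓ (S ω) y) - ∑ y, C ω y * ℓ (C ω) y := fun ω => rfl
    rw [integral_congr_ae (Filter.Eventually.of_forall hptd),
      integral_sub (integrable_finset_sum _ fun y _ => hf1 y)
        (integrable_finset_sum _ fun y _ => hf2 y),
      integral_finset_sum _ (fun y _ => hf1 y),
      integral_finset_sum _ (fun y _ => hf2 y)]
  rw [hLHS, hdiv1, hdiv2]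
  have hgE : gEntropy ℓ Qbar = ∑ y, Qbar y * ℓ Qbar y := rfl
  rw [hgE]
  ring
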